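/- Assume 0 < μ < 1/L_f, 0 < β < 2, ρ > 0, and b ∈ Im(A); let σ > 0 satisfy ‖Aᵀλ‖ ≥ σ‖λ‖ for every λ ∈ Im(A). Consider the LCDC-ALM iterates with λ⁰ ∈ Im(A): for each k ≥ 0, x^{k+1} minimizes x ↦ ⟨∇f(x^k), x − x^k⟩ + ⟨λ^k, Ax − b⟩ + (ρ/2)‖Ax − b‖² + ‖x − z^k‖²/(2μ); x_{μg}(z^k) is the proximal point of g at z^k; z^{k+1} = z^k + β(x^{k+1} − x_{μg}(z^k)); λ^{k+1} = λ^k + ρ(Ax^{k+1} − b); with conventions x^{−1} = x⁰ and z^{−1} = x⁰ + μ(∇f(x⁰) + Aᵀλ⁰). Set c₁ = (μ^{-1} − L_f)/2, c₂ = (1/β − 1/2)/μ, c₃ = 3μ^{-2}/σ², c₄ = 3L_f²/σ², and let ν > 0 be such that κ₁ = c₁ − c₃/ρ − ν/2 > 0, κ₂ = c₂ − ν/2 > 0, κ₃ = ν/2 − c₄/ρ > 0, κ₄ = ν/2 − c₃/ρ > 0. Define Ψ_k = ψ(x^k, z^k, λ^k) + (ν/2)‖x^k − x^{k−1}‖²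 + (ν/2)‖z^k − z^{k−1}‖². Then for all k ≥ 0, Ψ_k − Ψ_{k+1} ≥ κ₁‖x^{k+1} − x^k‖² + κ₂‖z^{k+1} − z^k‖² + κ₃‖x^k − x^{k−1}‖² + κ₄‖z^k − z^{k−1}‖². -/

import Mathlib

open scoped RealInnerProductSpace

noncomputable section

/-- `ℝⁿ` with the Euclidean norm. -/
abbrev En (n : ℕ) := EuclideanSpace ℝ (Fin n)

/-- Real-valued Moreau envelope/proximal map of the convex function `g`. -/
def IsMoreauR {n : ℕ} (g : En n → ℝ) (μ : ℝ) (Mg : En n → ℝ) (xg : En n → En n) : Prop :=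
  ∀ z : En n,
    Mg z = g (xg z) + ‖xg z - z‖ ^ 2 / (2 * μ) ∧
    (∀ x, Mg z ≤ g x + ‖x - z‖ ^ 2 / (2 * μ)) ∧
    (∀ x, g x + ‖x - z‖ ^ 2 / (2 * μ) = Mg z → x = xg z)

/-- The smoothed proximal augmented Lagrangian
`ψ(x,z,λ) = f(x) + ⟨λ, Ax−b⟩ + (ρ/2)‖Ax−b‖² + ‖x−z‖²/(2μ) − M_{μg}(z)`. -/
def psiAL {n m : ℕ} (f : En n → ℝ) (Mg : En n → ℝ) (A : En n →L[ℝ] En m) (b : En m)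
    (μ ρ : ℝ) (x z : En n) (lam : En m) : ℝ :=
  f x + ⟪lam, A x - b⟫ + (ρ / 2) * ‖A x - b‖ ^ 2 + ‖x - z‖ ^ 2 / (2 * μ) - Mg z

set_option maxHeartbeats 1000000

lemma quad_zero (c d : ℝ) (hc : 0 ≤ c) (h : ∀ t : ℝ, 0 ≤ t * d + t ^ 2 * c) : d = 0 := by
  by_contra hd
  have hc1 : (0:ℝ) < c + 1 := by linarith
  have h1 := h (-(d / (c + 1)))
  have key : -(d / (c + 1)) * d + (-(d / (c + 1))) ^ 2 * c = -(d^2) / (c+1)^2 := by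
    field_simp; ring
  rw [key] at h1
  have hd2 : 0 < d ^ 2 := by positivity
  have h4 : 0 < (c+1)^2 := by positivity
  have h5 := div_pos hd2 h4
  rw [neg_div] at h1
  linarith

lemma pos_small (a c : ℝ) (hc : 0 ≤ c) (h : ∀ t : ℝ, 0 < t → t ≤ 1 → 0 ≤ a + t * c) : 0 ≤ a := by
  by_contra ha
  push_neg at ha
  rcases eq_or_lt_of_le hc with h0 | h0
  · have := h 1 one_pos le_rfl; nlinarith
  · have ht : 0 < min 1 (-a / (2 * c)) := lt_min one_pos (div_pos (by linarith) (by linarith))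
    have h1 := h _ ht (min_le_left _ _)
    have h2 : min 1 (-a / (2 * c)) * c ≤ -a / (2 * c) * c :=
      mul_le_mul_of_nonneg_right (min_le_right _ _) hc
    have h3 : -a / (2 * c) * c = -a / 2 := by field_simp
    linarith

lemma descent_lemma {n : ℕ} (f : En n → ℝ) (f' : En n → En n) (L : ℝ) (hL : 0 ≤ L)
    (hdiff : ∀ x, HasGradientAt f (f' x) x)
    (hlip : ∀ x y : En n, ‖f' x - f' y‖ ≤ L * ‖x - y‖) (x y : En n) :
    f y ≤ f x + ⟪f' x, y - x⟫ + L / 2 * ‖y - x‖ ^ 2 := by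
  set v := y - x with hv
  have hc : ∀ t : ℝ, HasDerivAt (fun t : ℝ => x + t • v) v t := by
    intro t
    simpa using ((hasDerivAt_id t).smul_const v).const_add x
  have hf : ∀ t : ℝ, HasDerivAt (fun t : ℝ => f (x + t • v)) ⟪f' (x + t • v), v⟫ t := by
    intro t
    have h1 := (hdiff (x + t • v)).hasFDerivAt
    have := h1.comp_hasDerivAt t (hc t)
    simpa [InnerProductSpace.toDual_apply_apply, Function.comp_def] using this
  set Φ : ℝ → ℝ := fun t => f (x + t • v) - t * ⟪f' x, v⟫ - t ^ 2 * (L / 2 * ‖v‖ ^ 2) with hΦ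
  have hΦ' : ∀ t : ℝ, HasDerivAt Φ
      (⟪f' (x + t • v), v⟫ - ⟪f' x, v⟫ - (2 * t) * (L / 2 * ‖v‖ ^ 2)) t := by
    intro t
    have h2 : HasDerivAt (fun t : ℝ => t * ⟪f' x, v⟫) ⟪f' x, v⟫ t := by
      simpa using (hasDerivAt_id t).mul_const ⟪f' x, v⟫
    have h3 : HasDerivAt (fun t : ℝ => t ^ 2 * (L / 2 * ‖v‖ ^ 2)) ((2 * t) * (L / 2 * ‖v‖ ^ 2)) t := by
      simpa using (hasDerivAt_pow 2 t).mul_const (L / 2 * ‖v‖ ^ 2)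
    exact ((hf t).sub h2).sub h3
  have hanti : AntitoneOn Φ (Set.Icc 0 1) := by
    apply antitoneOn_of_deriv_nonpos (convex_Icc 0 1)
    · exact (Continuous.continuousOn (by
        exact continuous_iff_continuousAt.2 fun t => (hΦ' t).continuousAt))
    · intro t ht
      exact ((hΦ' t).differentiableAt).differentiableWithinAt
    · intro t ht
      rw [interior_Icc] at ht
      rw [(hΦ' t).deriv]
      have h4 : ⟪f' (x + t • v), v⟫ - ⟪f' x, v⟫ = ⟪f' (x + t • v) - f' x, v⟫ := by
        rw [inner_sub_left]
      have h5 : ⟪f' (x + t • v) - f' x, v⟫ ≤ ‖f' (x + t • v) - f' x‖ * ‖v‖ :=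
        real_inner_le_norm _ _
      have h6 : ‖f' (x + t • v) - f' x‖ ≤ L * ‖t • v‖ := by
        have := hlip (x + t • v) x
        simpa using this
      have h7 : ‖t • v‖ = t * ‖v‖ := by
        rw [norm_smul, Real.norm_eq_abs, abs_of_pos ht.1]
      have h8 : ‖f' (x + t • v) - f' x‖ * ‖v‖ ≤ L * t * ‖v‖ * ‖v‖ := by
        apply mul_le_mul_of_nonneg_right _ (norm_nonneg _)
        rw [h7] at h6; linarith [h6]
      rw [h4]
      nlinarith [h5, h8]
  have h01 : Φ 1 ≤ Φ 0 := hanti (Set.mem_Icc.2 ⟨le_rfl, zero_le_one⟩)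
    (Set.mem_Icc.2 ⟨zero_le_one, le_rfl⟩) zero_le_one
  have e0 : Φ 0 = f x := by simp [hΦ]
  have e1 : Φ 1 = f (x + v) - ⟪f' x, v⟫ - L / 2 * ‖v‖ ^ 2 := by simp [hΦ]
  have exy : x + v = y := by rw [hv]; abel
  rw [e0, e1, exy] at h01
  linarith

lemma prox_vi {n : ℕ} {g : En n → ℝ} (hg : ConvexOn ℝ Set.univ g) {μ : ℝ} (hμ : 0 < μ)
    {Mg : En n → ℝ} {xg : En n → En n} (hp : IsMoreauR g μ Mg xg) (z w : En n) :
    g (xg z) + μ⁻¹ * ⟪z - xg z, w - xg z⟫ ≤ g w := by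
  obtain ⟨heq, hmin, -⟩ := hp z
  set p := xg z with hpz
  have key : 0 ≤ g w - g p - μ⁻¹ * ⟪z - p, w - p⟫ := by
    apply pos_small _ (μ⁻¹ * ‖w - p‖ ^ 2 / 2) (by positivity)
    intro t ht0 ht1
    have hx := hmin (p + t • (w - p))
    rw [heq] at hx
    have hcv := hg.2 (Set.mem_univ p) (Set.mem_univ w) (by linarith : (0:ℝ) ≤ 1 - t) ht0.le
      (by ring)
    have hpt : (1 - t) • p + t • w = p + t • (w - p) := by module
    rw [hpt] at hcv
    have hex : ‖(p + t • (w - p)) - z‖ ^ 2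
        = ‖p - z‖ ^ 2 + 2 * (t * ⟪p - z, w - p⟫) + t ^ 2 * ‖w - p‖ ^ 2 := by
      have e : (p + t • (w - p)) - z = (p - z) + t • (w - p) := by abel
      rw [e, norm_add_sq_real, real_inner_smul_right, norm_smul, Real.norm_eq_abs,
        mul_pow, sq_abs]
    rw [hex] at hx
    have hnz : ‖xg z - z‖ = ‖p - z‖ := by rw [hpz]
    rw [hnz] at hx
    -- hx : g p + ‖p-z‖²/(2μ) ≤ g (p+t(w-p)) + (‖p-z‖² + 2t⟪p-z,w-p⟫ + t²‖w-p‖²)/(2μ)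
    -- hcv : g (p+t(w-p)) ≤ (1-t) g p + t g w
    -- combine: 0 ≤ t(g w - g p) + t⟪p-z,w-p⟫/μ + t²‖w-p‖²/(2μ)
    have hstep : 0 ≤ t * ((g w - g p - μ⁻¹ * ⟪z - p, w - p⟫) + t * (μ⁻¹ * ‖w - p‖ ^ 2 / 2)) := by
      have e1 : ⟪z - p, w - p⟫ = -⟪p - z, w - p⟫ := by
        rw [← inner_neg_left]; congr 1; abel
      have e2 : ∀ a : ℝ, a / (2 * μ) = μ⁻¹ * a / 2 := by
        intro a; rw [div_eq_mul_inv, mul_inv]; ring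
      rw [e1]
      rw [e2, e2] at hx
      simp only [smul_eq_mul] at hcv
      ring_nf at hx hcv ⊢
      nlinarith [hx, hcv]
    have := (mul_nonneg_iff_of_pos_left ht0).1 hstep
    linarith [this]
  linarith [key]

lemma moreau_subgrad {n : ℕ} {g : En n → ℝ} (hg : ConvexOn ℝ Set.univ g) {μ : ℝ} (hμ : 0 < μ)
    {Mg : En n → ℝ} {xg : En n → En n} (hp : IsMoreauR g μ Mg xg) (z z' : En n) :
    Mg z + μ⁻¹ * ⟪z - xg z, z' - z⟫ ≤ Mg z' := by
  obtain ⟨heq', -, -⟩ := hp z'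
  obtain ⟨heq, -, -⟩ := hp z
  have hvi := prox_vi hg hμ hp z (xg z')
  set p := xg z
  set q := xg z'
  set u := z - p with hu
  set v := z' - q with hv
  have hz' : z' - z = v - u + (q - p) := by rw [hu, hv]; abel
  have hiz : ⟪u, z' - z⟫ = ⟪u, v⟫ - ⟪u, u⟫ + ⟪u, q - p⟫ := by
    rw [hz', inner_add_right, inner_sub_right]
  have huu : ⟪u, u⟫ = ‖u‖ ^ 2 := real_inner_self_eq_norm_sq u
  have hkey : ⟪u, z' - z⟫ + ‖u‖ ^ 2 / 2 ≤ ⟪u, q - p⟫ + ‖v‖ ^ 2 / 2 := by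
    rw [hiz, huu]
    nlinarith [norm_sub_sq_real u v, sq_nonneg ‖u - v‖]
  have hnu : ‖p - z‖ = ‖u‖ := by rw [hu, norm_sub_rev]
  have hnv : ‖q - z'‖ = ‖v‖ := by rw [hv, norm_sub_rev]
  rw [heq, heq', hnu, hnv]
  -- goal : g p + ‖u‖²/(2μ) + μ⁻¹⟪u, z'-z⟫ ≤ g q + ‖v‖²/(2μ)
  -- hvi : g p + μ⁻¹⟪u, q - p⟫ ≤ g q
  have e2 : ∀ a : ℝ, a / (2 * μ) = μ⁻¹ * a / 2 := by intro a; rw [div_eq_mul_inv, mul_inv]; ring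
  rw [e2, e2]
  have hmul := mul_le_mul_of_nonneg_left hkey (le_of_lt (inv_pos.mpr hμ))
  ring_nf at hmul hvi ⊢
  nlinarith [hvi, hmul]

/-- descent of the potential
`Ψ_k = ψ(x^k,z^k,λ^k) + (ν/2)‖x^k−x^{k−1}‖² + (ν/2)‖z^k−z^{k−1}‖²`
along the LCDC-ALM iterates, with the conventions `x⁻¹ = x⁰` and
`z⁻¹ = x⁰ + μ(∇f(x⁰) + Aᵀλ⁰)`. -/
theorem stmt19 {n m : ℕ} (f : En n → ℝ) (f' : En n → En n) (Lf : ℝ) (hLf : 0 < Lf)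
    (hfdiff : ∀ x, HasGradientAt f (f' x) x)
    (hfLip : ∀ x y : En n, ‖f' x - f' y‖ ≤ Lf * ‖x - y‖)
    (g : En n → ℝ) (hg : ConvexOn ℝ Set.univ g)
    (A : En n →L[ℝ] En m) (hA : A ≠ 0) (b : En m)
    (hb : b ∈ Set.range (fun u : En n => A u))
    (σ : ℝ) (hσ : 0 < σ)
    (hσA : ∀ v : En m, v ∈ Set.range (fun u : En n => A u) →
      σ * ‖v‖ ≤ ‖(ContinuousLinearMap.adjoint A) v‖)
    (μ β ρ : ℝ) (hμ0 : 0 < μ) (hμ1 : μ < 1 / Lf) (hβ0 : 0 < β) (hβ2 : β < 2) (hρ : 0 < ρ)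
    (c1 c2 c3 c4 ν κ1 κ2 κ3 κ4 : ℝ)
    (hc1 : c1 = (μ⁻¹ - Lf) / 2) (hc2 : c2 = (1 / β - 1 / 2) / μ)
    (hc3 : c3 = 3 * μ⁻¹ ^ 2 / σ ^ 2) (hc4 : c4 = 3 * Lf ^ 2 / σ ^ 2)
    (hν : 0 < ν)
    (hκ1 : κ1 = c1 - c3 / ρ - ν / 2) (hκ1pos : 0 < κ1)
    (hκ2 : κ2 = c2 - ν / 2) (hκ2pos : 0 < κ2)
    (hκ3 : κ3 = ν / 2 - c4 / ρ) (hκ3pos : 0 < κ3)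
    (hκ4 : κ4 = ν / 2 - c3 / ρ) (hκ4pos : 0 < κ4)
    (Mg : En n → ℝ) (xg : En n → En n) (hgprox : IsMoreauR g μ Mg xg)
    (x z : ℕ → En n) (lam : ℕ → En m)
    (hlam0 : lam 0 ∈ Set.range (fun u : En n => A u))
    (hx : ∀ k : ℕ, ∀ w : En n,
      ⟪f' (x k), x (k + 1) - x k⟫ + ⟪lam k, A (x (k + 1)) - b⟫ +
          (ρ / 2) * ‖A (x (k + 1)) - b‖ ^ 2 + ‖x (k + 1) - z k‖ ^ 2 / (2 * μ) ≤
        ⟪f' (x k), w - x k⟫ + ⟪lam k, A w - b⟫ +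
          (ρ / 2) * ‖A w - b‖ ^ 2 + ‖w - z k‖ ^ 2 / (2 * μ))
    (hz : ∀ k : ℕ, z (k + 1) = z k + β • (x (k + 1) - xg (z k)))
    (hlam : ∀ k : ℕ, lam (k + 1) = lam k + ρ • (A (x (k + 1)) - b)) :
    ∀ k : ℕ,
      κ1 * ‖x (k + 1) - x k‖ ^ 2 + κ2 * ‖z (k + 1) - z k‖ ^ 2 +
          κ3 * ‖x k - x (k - 1)‖ ^ 2 +
          κ4 * ‖z k - (if k = 0 then
            x 0 + μ • (f' (x 0) + (ContinuousLinearMap.adjoint A) (lam 0))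
            else z (k - 1))‖ ^ 2 ≤
        (psiAL f Mg A b μ ρ (x k) (z k) (lam k) +
            ν / 2 * ‖x k - x (k - 1)‖ ^ 2 +
            ν / 2 * ‖z k - (if k = 0 then
              x 0 + μ • (f' (x 0) + (ContinuousLinearMap.adjoint A) (lam 0))
              else z (k - 1))‖ ^ 2) -
          (psiAL f Mg A b μ ρ (x (k + 1)) (z (k + 1)) (lam (k + 1)) +
            ν / 2 * ‖x (k + 1) - x k‖ ^ 2 +
            ν / 2 * ‖z (k + 1) - z k‖ ^ 2) := by
  have hμ' : μ ≠ 0 := ne_of_gt hμ0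
  have e6 : ∀ a : ℝ, a / (2 * μ) = μ⁻¹ * a / 2 := fun a => by
    rw [div_eq_mul_inv, mul_inv]; ring
  set adA := ContinuousLinearMap.adjoint A with hadA
  set G : ℕ → En n := fun j => f' (x j) + adA (lam (j + 1)) + μ⁻¹ • (x (j + 1) - z j)
    with hG
  -- quadratic expansion of the x-subproblem objective
  have hexp : ∀ (j : ℕ) (w : En n),
      (⟪f' (x j), w - x j⟫ + ⟪lam j, A w - b⟫ + (ρ / 2) * ‖A w - b‖ ^ 2 +
        ‖w - z j‖ ^ 2 / (2 * μ))
      - (⟪f' (x j), x (j + 1) - x j⟫ + ⟪lam j, A (x (j + 1)) - b⟫ +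
        (ρ / 2) * ‖A (x (j + 1)) - b‖ ^ 2 + ‖x (j + 1) - z j‖ ^ 2 / (2 * μ))
      = ⟪G j, w - x (j + 1)⟫ + (ρ / 2) * ‖A (w - x (j + 1))‖ ^ 2 +
        ‖w - x (j + 1)‖ ^ 2 / (2 * μ) := by
    intro j w
    obtain ⟨h, rfl⟩ : ∃ h, w = x (j + 1) + h := ⟨w - x (j + 1), by abel⟩
    have e0 : x (j + 1) + h - x (j + 1) = h := by abel
    have e1 : A (x (j + 1) + h) - b = (A (x (j + 1)) - b) + A h := by rw [map_add]; abel
    have e2 : (x (j + 1) + h) - z j = (x (j + 1) - z j) + h := by abel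
    have e3 : (x (j + 1) + h) - x j = (x (j + 1) - x j) + h := by abel
    rw [e0, e1, e2, e3, norm_add_sq_real, norm_add_sq_real, inner_add_right, inner_add_right]
    have hGh : ⟪G j, h⟫ = ⟪f' (x j), h⟫ + (⟪lam j, A h⟫ + ρ * ⟪A (x (j + 1)) - b, A h⟫) +
        μ⁻¹ * ⟪x (j + 1) - z j, h⟫ := by
      rw [hG]
      simp only [hlam j, hadA, inner_add_left, map_add, map_smul, real_inner_smul_left,
        ContinuousLinearMap.adjoint_inner_left]
    rw [hGh]
    simp only [div_eq_mul_inv, mul_inv]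
    ring
  -- first-order optimality of the x-update
  have hfoc : ∀ j : ℕ, G j = 0 := by
    intro j
    have hd : ⟪G j, G j⟫ = (0:ℝ) := by
      have hcnn : (0:ℝ) ≤ (ρ / 2) * ‖A (G j)‖ ^ 2 + ‖G j‖ ^ 2 / (2 * μ) :=
        add_nonneg (mul_nonneg (by linarith) (by positivity))
          (div_nonneg (by positivity) (by linarith))
      refine quad_zero _ _ hcnn ?_
      intro t
      have h1 := hx j (x (j + 1) + t • G j)
      have h2 := hexp j (x (j + 1) + t • G j)
      rw [show x (j + 1) + t • G j - x (j + 1) = t • G j by abel] at h2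
      rw [real_inner_smul_right, map_smul] at h2
      have e4 : ‖t • G j‖ ^ 2 = t ^ 2 * ‖G j‖ ^ 2 := by
        rw [norm_smul, Real.norm_eq_abs, mul_pow, sq_abs]
      have e5 : ‖t • (A (G j))‖ ^ 2 = t ^ 2 * ‖A (G j)‖ ^ 2 := by
        rw [norm_smul, Real.norm_eq_abs, mul_pow, sq_abs]
      rw [e4, e5] at h2
      simp only [div_eq_mul_inv, mul_inv] at h1 h2 ⊢
      nlinarith [h1, h2]
    exact inner_self_eq_zero.1 hd
  -- strong decrease of the subproblem objective
  have hQdrop : ∀ j : ℕ,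
      (⟪f' (x j), x (j + 1) - x j⟫ + ⟪lam j, A (x (j + 1)) - b⟫ +
        (ρ / 2) * ‖A (x (j + 1)) - b‖ ^ 2 + ‖x (j + 1) - z j‖ ^ 2 / (2 * μ))
      + ‖x (j + 1) - x j‖ ^ 2 / (2 * μ)
      ≤ ⟪lam j, A (x j) - b⟫ + (ρ / 2) * ‖A (x j) - b‖ ^ 2 + ‖x j - z j‖ ^ 2 / (2 * μ) := by
    intro j
    have h2 := hexp j (x j)
    rw [hfoc j] at h2
    simp only [inner_zero_left] at h2
    have hnn : (0:ℝ) ≤ (ρ / 2) * ‖A (x j - x (j + 1))‖ ^ 2 :=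
      mul_nonneg (by linarith) (by positivity)
    have e : ‖x j - x (j + 1)‖ = ‖x (j + 1) - x j‖ := norm_sub_rev _ _
    have e7 : ⟪f' (x j), x j - x j⟫ = (0:ℝ) := by simp
    rw [e] at h2
    linarith [h2]
  -- adjoint identity for the multipliers
  have hlamT : ∀ j : ℕ, adA (lam (j + 1)) = -f' (x j) - μ⁻¹ • (x (j + 1) - z j) := by
    intro j
    have h := hfoc j
    simp only [hG] at h
    rw [← sub_eq_zero, ← h]
    module
  intro k
  set zm : En n := if k = 0 then x 0 + μ • (f' (x 0) + adA (lam 0)) else z (k - 1) with hzm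
  have hATk : adA (lam k) = -f' (x (k - 1)) - μ⁻¹ • (x k - zm) := by
    rcases Nat.eq_zero_or_pos k with hk0 | hkpos
    · subst hk0
      rw [hzm]
      simp only [if_pos rfl, Nat.zero_sub, reduceIte]
      have e : x 0 - (x 0 + μ • (f' (x 0) + adA (lam 0))) = -(μ • (f' (x 0) + adA (lam 0))) := by
        abel
      rw [e, smul_neg, smul_smul, inv_mul_cancel₀ hμ', one_smul]
      abel
    · obtain ⟨j, rfl⟩ : ∃ j, k = j + 1 := ⟨k - 1, (Nat.succ_pred_eq_of_pos hkpos).symm⟩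
      rw [hzm]
      simp only [if_neg (Nat.succ_ne_zero j), Nat.add_sub_cancel]
      exact hlamT j
  have hAT : adA (lam (k + 1) - lam k)
      = -(f' (x k) - f' (x (k - 1))) - μ⁻¹ • (x (k + 1) - x k) + μ⁻¹ • (z k - zm) := by
    rw [map_sub, hlamT k, hATk]
    module
  -- the multiplier increment lies in the range of A
  have hrange : lam (k + 1) - lam k ∈ Set.range (fun u : En n => A u) := by
    obtain ⟨u0, hu0⟩ := hb
    refine ⟨ρ • (x (k + 1) - u0), ?_⟩
    simp only [map_smul, map_sub, hu0, hlam k]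
    abel
  have hσΔ := hσA _ hrange
  -- norm bound on the adjoint of the increment
  have h1 : ‖adA (lam (k + 1) - lam k)‖
      ≤ Lf * ‖x k - x (k - 1)‖ + μ⁻¹ * ‖x (k + 1) - x k‖ + μ⁻¹ * ‖z k - zm‖ := by
    rw [hAT]
    have n1 : ‖μ⁻¹ • (x (k + 1) - x k)‖ = μ⁻¹ * ‖x (k + 1) - x k‖ := by
      rw [norm_smul, Real.norm_eq_abs, abs_of_pos (inv_pos.mpr hμ0)]
    have n2 : ‖μ⁻¹ • (z k - zm)‖ = μ⁻¹ * ‖z k - zm‖ := by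
      rw [norm_smul, Real.norm_eq_abs, abs_of_pos (inv_pos.mpr hμ0)]
    have n3 := hfLip (x k) (x (k - 1))
    calc ‖-(f' (x k) - f' (x (k - 1))) - μ⁻¹ • (x (k + 1) - x k) + μ⁻¹ • (z k - zm)‖
        ≤ ‖-(f' (x k) - f' (x (k - 1))) - μ⁻¹ • (x (k + 1) - x k)‖ + ‖μ⁻¹ • (z k - zm)‖ :=
          norm_add_le _ _
      _ ≤ ‖-(f' (x k) - f' (x (k - 1)))‖ + ‖μ⁻¹ • (x (k + 1) - x k)‖ + ‖μ⁻¹ • (z k - zm)‖ := by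
          linarith [norm_sub_le (-(f' (x k) - f' (x (k - 1)))) (μ⁻¹ • (x (k + 1) - x k))]
      _ ≤ Lf * ‖x k - x (k - 1)‖ + μ⁻¹ * ‖x (k + 1) - x k‖ + μ⁻¹ * ‖z k - zm‖ := by
          rw [norm_neg, n1, n2]; linarith [n3]
  -- squared bound
  have h2 : σ ^ 2 * ‖lam (k + 1) - lam k‖ ^ 2
      ≤ 3 * Lf ^ 2 * ‖x k - x (k - 1)‖ ^ 2 + 3 * μ⁻¹ ^ 2 * ‖x (k + 1) - x k‖ ^ 2 +
        3 * μ⁻¹ ^ 2 * ‖z k - zm‖ ^ 2 := by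
    have ha := mul_self_le_mul_self (mul_nonneg hσ.le (norm_nonneg _)) (le_trans hσΔ h1)
    nlinarith [ha, sq_nonneg (Lf * ‖x k - x (k - 1)‖ - μ⁻¹ * ‖x (k + 1) - x k‖),
      sq_nonneg (Lf * ‖x k - x (k - 1)‖ - μ⁻¹ * ‖z k - zm‖),
      sq_nonneg (μ⁻¹ * ‖x (k + 1) - x k‖ - μ⁻¹ * ‖z k - zm‖)]
  -- dual bound divided by ρ
  have h3 : ρ⁻¹ * ‖lam (k + 1) - lam k‖ ^ 2
      ≤ (c4 / ρ) * ‖x k - x (k - 1)‖ ^ 2 + (c3 / ρ) * ‖x (k + 1) - x k‖ ^ 2 +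
        (c3 / ρ) * ‖z k - zm‖ ^ 2 := by
    have hσ2 : (0:ℝ) < σ ^ 2 := by positivity
    have e : σ ^ 2 * (c4 * ‖x k - x (k - 1)‖ ^ 2 + c3 * ‖x (k + 1) - x k‖ ^ 2 +
        c3 * ‖z k - zm‖ ^ 2)
        = 3 * Lf ^ 2 * ‖x k - x (k - 1)‖ ^ 2 + 3 * μ⁻¹ ^ 2 * ‖x (k + 1) - x k‖ ^ 2 +
          3 * μ⁻¹ ^ 2 * ‖z k - zm‖ ^ 2 := by
      rw [hc3, hc4]; field_simp
    have hkey : σ ^ 2 * ‖lam (k + 1) - lam k‖ ^ 2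
        ≤ σ ^ 2 * (c4 * ‖x k - x (k - 1)‖ ^ 2 + c3 * ‖x (k + 1) - x k‖ ^ 2 +
          c3 * ‖z k - zm‖ ^ 2) := by rw [e]; exact h2
    have h3' := (mul_le_mul_iff_right₀ hσ2).1 hkey
    have h3'' := mul_le_mul_of_nonneg_left h3' (le_of_lt (inv_pos.mpr hρ))
    have e2 : ρ⁻¹ * (c4 * ‖x k - x (k - 1)‖ ^ 2 + c3 * ‖x (k + 1) - x k‖ ^ 2 +
        c3 * ‖z k - zm‖ ^ 2)
        = (c4 / ρ) * ‖x k - x (k - 1)‖ ^ 2 + (c3 / ρ) * ‖x (k + 1) - x k‖ ^ 2 +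
          (c3 / ρ) * ‖z k - zm‖ ^ 2 := by ring
    linarith [h3'', e2.le, e2.ge]
  -- Piece 1 : descent in x
  have hP1 : psiAL f Mg A b μ ρ (x (k + 1)) (z k) (lam k) + c1 * ‖x (k + 1) - x k‖ ^ 2
      ≤ psiAL f Mg A b μ ρ (x k) (z k) (lam k) := by
    have hd := descent_lemma f f' Lf hLf.le hfdiff hfLip (x k) (x (k + 1))
    have hq := hQdrop k
    simp only [psiAL]
    rw [hc1]
    have e7 : ‖x (k + 1) - x k‖ ^ 2 / (2 * μ) = μ⁻¹ * ‖x (k + 1) - x k‖ ^ 2 / 2 := e6 _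
    linarith [hd, hq, e7.le, e7.ge]
  -- Piece 2 : descent in z
  have hP2 : psiAL f Mg A b μ ρ (x (k + 1)) (z (k + 1)) (lam k) + c2 * ‖z (k + 1) - z k‖ ^ 2
      ≤ psiAL f Mg A b μ ρ (x (k + 1)) (z k) (lam k) := by
    set p := xg (z k) with hp
    set ee : En n := x (k + 1) - p with he
    have hzz : z (k + 1) - z k = β • ee := by rw [hz k]; abel
    have hms := moreau_subgrad hg hμ0 hgprox (z k) (z (k + 1))
    rw [hzz, real_inner_smul_right] at hms
    have hni : ‖x (k + 1) - z (k + 1)‖ ^ 2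
        = ‖x (k + 1) - z k‖ ^ 2 - 2 * (β * ⟪x (k + 1) - z k, ee⟫) + β ^ 2 * ‖ee‖ ^ 2 := by
      have e8 : x (k + 1) - z (k + 1) = (x (k + 1) - z k) - β • ee := by
        rw [hz k]; abel
      rw [e8, norm_sub_sq_real, real_inner_smul_right, norm_smul, Real.norm_eq_abs,
        mul_pow, sq_abs]
    have hnz2 : ‖z (k + 1) - z k‖ ^ 2 = β ^ 2 * ‖ee‖ ^ 2 := by
      rw [hzz, norm_smul, Real.norm_eq_abs, mul_pow, sq_abs]
    have hsum : ⟪x (k + 1) - z k, ee⟫ + ⟪z k - p, ee⟫ = ‖ee‖ ^ 2 := by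
      rw [← inner_add_left, show (x (k + 1) - z k) + (z k - p) = ee by rw [he]; abel,
        real_inner_self_eq_norm_sq]
    have hc2' : c2 * (β ^ 2 * ‖ee‖ ^ 2)
        = μ⁻¹ * (β * ‖ee‖ ^ 2) - μ⁻¹ * (β ^ 2 * ‖ee‖ ^ 2) / 2 := by
      rw [hc2]; field_simp
    have hprod : μ⁻¹ * (β * (⟪x (k + 1) - z k, ee⟫ + ⟪z k - p, ee⟫))
        = μ⁻¹ * (β * ‖ee‖ ^ 2) := by rw [hsum]
    have hc2'' : c2 * ‖z (k + 1) - z k‖ ^ 2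
        = μ⁻¹ * (β * ‖ee‖ ^ 2) - μ⁻¹ * (β ^ 2 * ‖ee‖ ^ 2) / 2 := by
      rw [hnz2]; exact hc2'
    have d1 : ‖x (k + 1) - z k‖ ^ 2 / (2 * μ) = μ⁻¹ * ‖x (k + 1) - z k‖ ^ 2 / 2 := e6 _
    have d2 : ‖x (k + 1) - z (k + 1)‖ ^ 2 / (2 * μ)
        = μ⁻¹ * (‖x (k + 1) - z k‖ ^ 2 - 2 * (β * ⟪x (k + 1) - z k, ee⟫) +
            β ^ 2 * ‖ee‖ ^ 2) / 2 := by
      rw [hni]; exact e6 _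
    simp only [psiAL]
    linarith [hms, hc2'', hprod, d1.le, d1.ge, d2.le, d2.ge]
  -- Piece 3 : dual ascent identity
  have hP3 : psiAL f Mg A b μ ρ (x (k + 1)) (z (k + 1)) (lam (k + 1))
      = psiAL f Mg A b μ ρ (x (k + 1)) (z (k + 1)) (lam k)
        + ρ⁻¹ * ‖lam (k + 1) - lam k‖ ^ 2 := by
    simp only [psiAL, hlam k]
    rw [show lam k + ρ • (A (x (k + 1)) - b) - lam k = ρ • (A (x (k + 1)) - b) by abel]
    rw [inner_add_left, real_inner_smul_left, real_inner_self_eq_norm_sq, norm_smul,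
      Real.norm_eq_abs, abs_of_pos hρ, mul_pow]
    field_simp
    ring
  -- final assembly
  rw [hκ1, hκ2, hκ3, hκ4]
  linarith [hP1, hP2, hP3.le, hP3.ge, h3]
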